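/- Suppose a_p ∈ {0,1,…,B} for every prime p and Σ_{p ≤ x} a_p/p = log log x + c_f + o(1) as x → ∞. Then the product σ(x) = Π_{p ≤ x} (1 − a_p/p) over primes p ≤ x with a_p < p satisfies σ(x) ∼ C_f / log x for some constant C_f > 0, provided a_p < p for all p. -/
import Mathlib

open Filter Finset Real

theorem stmt_17 (B : ℕ) (hB : 1 ≤ B) (a : ℕ → ℕ)
    (ha : ∀ p, p.Prime → a p ≤ B) (ha' : ∀ p, p.Prime → a p < p)
    (cf : ℝ)
    (hsum : Filter.Tendsto
      (fun x : ℝ =>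
        (∑ p ∈ (Finset.range (⌊x⌋₊ + 1)).filter Nat.Prime, (a p : ℝ) / p) -
          Real.log (Real.log x))
      Filter.atTop (nhds cf)) :
    ∃ Cf : ℝ, 0 < Cf ∧ Filter.Tendsto
      (fun x : ℝ =>
        (∏ p ∈ (Finset.range (⌊x⌋₊ + 1)).filter Nat.Prime, (1 - (a p : ℝ) / p)) *
          Real.log x)
      Filter.atTop (nhds Cf) := by
  classical
  set f : ℕ → ℝ := fun p =>
    if p.Prime then Real.log (1 - (a p : ℝ) / p) + (a p : ℝ) / p else 0 with hf
  -- positivity of factors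
  have hfac : ∀ p : ℕ, p.Prime → 0 < 1 - (a p : ℝ) / p := by
    intro p hp
    have hp0 : (0 : ℝ) < p := by exact_mod_cast hp.pos
    have : (a p : ℝ) / p < 1 := by
      rw [div_lt_one hp0]
      exact_mod_cast ha' p hp
    linarith
  -- bound on f for large n
  have hbound : ∀ n : ℕ, 2 * B ≤ n → |f n| ≤ 2 * (B : ℝ) ^ 2 / n ^ 2 := by
    intro n hn
    by_cases hp : n.Prime
    · have hn0 : (0 : ℝ) < n := by exact_mod_cast hp.pos
      set t : ℝ := (a n : ℝ) / n with ht
      have ht0 : 0 ≤ t := div_nonneg (Nat.cast_nonneg _) hn0.le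
      have htB : t ≤ (B : ℝ) / n := by
        rw [ht]
        gcongr
        exact_mod_cast ha n hp
      have h2B : (2 * B : ℝ) ≤ n := by exact_mod_cast hn
      have hBn : (B : ℝ) / n ≤ 1 / 2 := by
        rw [div_le_div_iff₀ hn0 two_pos]
        linarith
      have ht2 : t ≤ 1 / 2 := htB.trans hBn
      have habs : |t| < 1 := by rw [abs_of_nonneg ht0]; linarith
      have key := Real.abs_log_sub_add_sum_range_le habs 1
      simp only [Finset.sum_range_one, pow_one, Nat.cast_zero, zero_add, div_one] at key
      have hfn : f n = Real.log (1 - t) + t := by simp [hf, hp, ht]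
      rw [hfn, add_comm]
      have h1 : |t| ^ 2 / (1 - |t|) ≤ 2 * t ^ 2 := by
        rw [abs_of_nonneg ht0]
        have h12 : (1 : ℝ) / 2 ≤ 1 - t := by linarith
        have := div_le_div_of_nonneg_left (sq_nonneg t) (by norm_num : (0:ℝ) < 1/2) h12
        calc t ^ 2 / (1 - t) ≤ t ^ 2 / (1 / 2) := this
          _ = 2 * t ^ 2 := by ring
      refine key.trans (h1.trans ?_)
      have : t ^ 2 ≤ (B : ℝ) ^ 2 / n ^ 2 := by
        calc t ^ 2 ≤ ((B : ℝ) / n) ^ 2 := pow_le_pow_left₀ ht0 htB 2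
          _ = (B : ℝ) ^ 2 / n ^ 2 := div_pow _ _ _
      calc 2 * t ^ 2 ≤ 2 * ((B : ℝ) ^ 2 / n ^ 2) := by linarith
        _ = 2 * (B : ℝ) ^ 2 / n ^ 2 := by ring
    · have : f n = 0 := by simp [hf, hp]
      rw [this, abs_zero]
      positivity
  -- summability of f
  have hsummable : Summable f := by
    apply summable_of_isBigO_nat (g := fun n : ℕ => 1 / (n : ℝ) ^ 2)
    · exact summable_one_div_nat_pow.mpr one_lt_two
    · apply Asymptotics.IsBigO.of_bound (2 * (B : ℝ) ^ 2)
      filter_upwards [eventually_ge_atTop (2 * B)] with n hn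
      have := hbound n hn
      simp only [Real.norm_eq_abs]
      calc |f n| ≤ 2 * (B : ℝ) ^ 2 / n ^ 2 := this
        _ = 2 * (B : ℝ) ^ 2 * |1 / (n : ℝ) ^ 2| := by
            rw [abs_of_nonneg (by positivity : (0:ℝ) ≤ 1 / (n : ℝ) ^ 2)]
            ring
  set S : ℝ := ∑' n, f n with hS
  -- partial sums tend to S
  have hpartial : Tendsto (fun x : ℝ => ∑ n ∈ Finset.range (⌊x⌋₊ + 1), f n)
      atTop (nhds S) := by
    have h1 : Tendsto (fun N : ℕ => ∑ n ∈ Finset.range N, f n) atTop (nhds S) :=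
      hsummable.hasSum.tendsto_sum_nat
    have h2 : Tendsto (fun x : ℝ => ⌊x⌋₊ + 1) atTop atTop :=
      (tendsto_add_atTop_nat 1).comp tendsto_nat_floor_atTop
    exact h1.comp h2
  -- rewrite filtered sum of f
  have hfsum : ∀ N : ℕ, ∑ n ∈ Finset.range N, f n =
      ∑ p ∈ (Finset.range N).filter Nat.Prime,
        (Real.log (1 - (a p : ℝ) / p) + (a p : ℝ) / p) := by
    intro N
    rw [Finset.sum_filter]
  -- the limit function
  refine ⟨Real.exp (S - cf), Real.exp_pos _, ?_⟩
  have hlim : Tendsto (fun x : ℝ =>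
      (∑ n ∈ Finset.range (⌊x⌋₊ + 1), f n) -
        ((∑ p ∈ (Finset.range (⌊x⌋₊ + 1)).filter Nat.Prime, (a p : ℝ) / p) -
          Real.log (Real.log x))) atTop (nhds (S - cf)) :=
    hpartial.sub hsum
  have hexp : Tendsto (fun x : ℝ => Real.exp
      ((∑ n ∈ Finset.range (⌊x⌋₊ + 1), f n) -
        ((∑ p ∈ (Finset.range (⌊x⌋₊ + 1)).filter Nat.Prime, (a p : ℝ) / p) -
          Real.log (Real.log x)))) atTop (nhds (Real.exp (S - cf))) :=
    (Real.continuous_exp.continuousAt.tendsto).comp hlim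
  refine hexp.congr' ?_
  filter_upwards [eventually_gt_atTop (1 : ℝ)] with x hx
  have hlogx : 0 < Real.log x := Real.log_pos hx
  set s := (Finset.range (⌊x⌋₊ + 1)).filter Nat.Prime with hs
  have hmem : ∀ p ∈ s, p.Prime := fun p hp => (Finset.mem_filter.mp hp).2
  have hprodpos : ∀ p ∈ s, 0 < 1 - (a p : ℝ) / p := fun p hp => hfac p (hmem p hp)
  have harg : (∑ n ∈ Finset.range (⌊x⌋₊ + 1), f n) -
      ((∑ p ∈ s, (a p : ℝ) / p) - Real.log (Real.log x)) =
      (∑ p ∈ s, Real.log (1 - (a p : ℝ) / p)) + Real.log (Real.log x) := by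
    rw [hfsum, Finset.sum_add_distrib]
    ring
  rw [harg, Real.exp_add, Real.exp_log hlogx]
  congr 1
  rw [Real.exp_sum]
  exact Finset.prod_congr rfl fun p hp => Real.exp_log (hprodpos p hp)
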